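/- Let p > 2 be an integer with p ≡ 2 (mod 4), and let q be an odd integer with 0 < q < p and gcd(p, q) = 1. Set ζ := exp(iπ(p−q)/p), and for each integer a set Q_a := (ζ^a + ζ^{−a})^2, writing Q := Q_1. Then Q ≠ 0, Q ≠ 1, Q_2 ≠ Q, and Q_2 ≠ Q_a for every odd a with 1 ≤ a ≤ p − 1, and one has the cancellation identity ∑_{a=1, a odd}^{p−1} (−1)^{(a−1)/2} · Q_a / (Q_2 − Q_a) = Q(Q − 1) / (Q_2 − Q); equivalently, 1 + ((Q_2 − Q)/(Q(1 − Q))) · ∑_{a=1, a odd}^{p−1} (−1)^{(a−1)/2} Q_a/(Q_2 − Q_a) = 0. -/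

import Mathlib

open Finset

set_option maxHeartbeats 1600000 in
lemma core_lemma (m : ℕ) (hm : Odd m) (hm1 : 1 < m) (w : ℂ)
    (hord : ∀ t : ℕ, w ^ t = 1 ↔ 2 * m ∣ t) :
    (2 + w + w⁻¹) ≠ 0 ∧ (2 + w + w⁻¹) ≠ 1 ∧
    ((2 + w ^ 2 + (w ^ 2)⁻¹) - (2 + w + w⁻¹)) ≠ 0 ∧
    (∀ a : ℕ, Odd a → (2 + w ^ 2 + (w ^ 2)⁻¹) - (2 + w ^ a + (w ^ a)⁻¹) ≠ 0) ∧
    (∑ k ∈ Finset.range m, (-1 : ℂ) ^ k * (2 + w ^ (2 * k + 1) + (w ^ (2 * k + 1))⁻¹) /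
        ((2 + w ^ 2 + (w ^ 2)⁻¹) - (2 + w ^ (2 * k + 1) + (w ^ (2 * k + 1))⁻¹))
      = (2 + w + w⁻¹) * ((2 + w + w⁻¹) - 1) /
        ((2 + w ^ 2 + (w ^ 2)⁻¹) - (2 + w + w⁻¹))) := by
  have hm3 : 3 ≤ m := by rcases hm with ⟨t, rfl⟩; omega
  have hw2m : w ^ (2 * m) = 1 := (hord _).2 dvd_rfl
  have hw0 : w ≠ 0 := by
    intro h
    rw [h, zero_pow (by omega)] at hw2m
    exact one_ne_zero hw2m.symm
  have hodd : ∀ t : ℕ, Odd t → w ^ t ≠ 1 := by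
    intro t ht h
    have h1 := (hord t).1 h
    have : 2 ∣ t := dvd_trans ⟨m, rfl⟩ h1
    exact (Nat.not_even_iff_odd.2 ht) (even_iff_two_dvd.2 this)
  have hwm : w ^ m = -1 := by
    have h2 : (w ^ m - 1) * (w ^ m + 1) = 0 := by
      have h3 : w ^ m * w ^ m = 1 := by rw [← pow_add, ← two_mul]; exact hw2m
      ring_nf
      linear_combination h3
    rcases mul_eq_zero.1 h2 with h | h
    · exact absurd (sub_eq_zero.1 h) (hodd m hm)
    · exact eq_neg_of_add_eq_zero_left h
  have hsmall : ∀ t : ℕ, 0 < t → t < 2 * m → w ^ t ≠ 1 := by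
    intro t ht0 htm h
    have := Nat.le_of_dvd ht0 ((hord t).1 h)
    omega
  have hw1 : w ≠ 1 := by
    have := hsmall 1 one_pos (by omega); rwa [pow_one] at this
  have hw21 : w ^ 2 ≠ 1 := hsmall 2 (by omega) (by omega)
  have hw31 : w ^ 3 ≠ 1 := hodd 3 (by decide)
  have hw41 : w ^ 4 ≠ 1 := hsmall 4 (by omega) (by omega)
  have hwn1 : w ≠ -1 := by
    intro h
    apply hw21
    rw [h]; ring
  have hu0 : w ^ 2 ≠ 0 := pow_ne_zero 2 hw0
  -- 1 + w^(2j) ≠ 0 for all j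
  have hu1 : ∀ j : ℕ, (1 : ℂ) + w ^ (2 * j) ≠ 0 := by
    intro j h
    have h2 : w ^ (2 * j) = -1 := by linear_combination h
    have h3 : w ^ (2 * j + m) = 1 := by
      rw [pow_add, h2, hwm]; ring
    exact hodd (2 * j + m) (by rcases hm with ⟨t, rfl⟩; exact ⟨j + t, by ring⟩) h3
  -- w^a ≠ w^2 and w^a ≠ (w^2)⁻¹ for odd a
  have hza : ∀ a : ℕ, Odd a → w ^ a ≠ w ^ 2 := by
    intro a ha h
    apply hodd (a + (2 * m - 2)) (by rcases ha with ⟨t, rfl⟩; exact ⟨t + m - 1, by omega⟩)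
    rw [pow_add, h, ← pow_add]
    have : 2 + (2 * m - 2) = 2 * m := by omega
    rw [this]; exact hw2m
  have hzb : ∀ a : ℕ, Odd a → w ^ a ≠ (w ^ 2)⁻¹ := by
    intro a ha h
    apply hodd (a + 2) (by rcases ha with ⟨t, rfl⟩; exact ⟨t + 1, by omega⟩)
    rw [pow_add, h]
    field_simp
  -- denominator factorization
  have hden : ∀ a : ℕ, (2 + w ^ 2 + (w ^ 2)⁻¹) - (2 + w ^ a + (w ^ a)⁻¹)
      = -((w ^ a - w ^ 2) * (w ^ a - (w ^ 2)⁻¹)) / w ^ a := by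
    intro a
    have hz0 : w ^ a ≠ 0 := pow_ne_zero a hw0
    field_simp
    ring
  have hdenne : ∀ a : ℕ, Odd a →
      (2 + w ^ 2 + (w ^ 2)⁻¹) - (2 + w ^ a + (w ^ a)⁻¹) ≠ 0 := by
    intro a ha
    rw [hden a]
    apply div_ne_zero _ (pow_ne_zero a hw0)
    simp only [neg_ne_zero]
    exact mul_ne_zero (sub_ne_zero.2 (hza a ha)) (sub_ne_zero.2 (hzb a ha))
  -- w^2 + w + 1 ≠ 0
  have hcube : w ^ 2 + w + 1 ≠ 0 := by
    intro h
    apply hw31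
    linear_combination (w - 1) * h
  have hQ0 : (2 : ℂ) + w + w⁻¹ ≠ 0 := by
    have : (2 : ℂ) + w + w⁻¹ = (w + 1) ^ 2 / w := by field_simp; ring
    rw [this]
    exact div_ne_zero (pow_ne_zero 2 (by intro h; exact hwn1 (by linear_combination h))) hw0
  have hQ1 : (2 : ℂ) + w + w⁻¹ ≠ 1 := by
    intro h
    apply hcube
    have : w * (2 + w + w⁻¹) = w * 1 := by rw [h]
    field_simp at this
    linear_combination this
  have hQ2Q : ((2 : ℂ) + w ^ 2 + (w ^ 2)⁻¹) - (2 + w + w⁻¹) ≠ 0 := by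
    have he : ((2 : ℂ) + w ^ 2 + (w ^ 2)⁻¹) - (2 + w + w⁻¹)
        = (w - 1) ^ 2 * (w ^ 2 + w + 1) / w ^ 2 := by
      field_simp
      ring
    rw [he]
    exact div_ne_zero (mul_ne_zero (pow_ne_zero 2 (sub_ne_zero.2 hw1)) hcube) hu0
  refine ⟨hQ0, hQ1, hQ2Q, hdenne, ?_⟩
  have huu : w ^ 2 - (w ^ 2)⁻¹ ≠ 0 := by
    rw [sub_ne_zero]
    intro h
    apply hw41
    have h2 : w ^ 2 * w ^ 2 = 1 := by
      nth_rewrite 2 [h]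
      exact mul_inv_cancel₀ hu0
    rw [show (4:ℕ) = 2 + 2 from rfl, pow_add]; exact h2
  have hu2m : (w ^ 2) ^ m = 1 := by rw [← pow_mul, mul_comm 2 m, mul_comm]; exact hw2m
  have hu2m' : ((w ^ 2)⁻¹) ^ m = 1 := by rw [inv_pow, hu2m]; norm_num
  set gg : ℕ → ℂ := fun j => ∑ k ∈ Finset.range m, (-(w ^ (2 * j))) ^ k with hgg
  have hgk : ∀ j : ℕ, (1 + w ^ (2 * j)) * gg j = 2 := by
    intro j
    have hgm := geom_sum_mul (-(w ^ (2 * j))) m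
    have hxm : (-(w ^ (2 * j))) ^ m = -1 := by
      rw [neg_pow, show (w ^ (2 * j)) ^ m = (w ^ (2 * m)) ^ j from by
        rw [← pow_mul, ← pow_mul]; congr 1; ring, hw2m]
      simp [Odd.neg_one_pow hm]
    rw [hxm] at hgm
    rw [hgg]
    linear_combination -hgm
  -- value of the alternating sums B(α)
  have hBval : ∀ α : ℂ, α ^ m = 1 →
      (∑ k ∈ Finset.range m, (-1:ℂ)^k * (w ^ (2*k+1) - α)⁻¹)
      = (-2 : ℂ)⁻¹ * ∑ j ∈ Finset.range m, α ^ (m-1-j) * (w ^ j * gg j) := by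
    intro α hα
    have hzm : ∀ k : ℕ, (w ^ (2*k+1)) ^ m = -1 := by
      intro k
      rw [← pow_mul, mul_comm, pow_mul, hwm]
      exact Odd.neg_one_pow ⟨k, by ring⟩
    have hinv : ∀ k : ℕ, (w ^ (2*k+1) - α)⁻¹
        = (∑ j ∈ Finset.range m, (w ^ (2*k+1)) ^ j * α ^ (m-1-j)) * (-2)⁻¹ := by
      intro k
      have hG := geom_sum₂_mul (w ^ (2*k+1)) α m
      rw [hzm k, hα] at hG
      have hne : w ^ (2*k+1) - α ≠ 0 := by
        intro h
        rw [h, mul_zero] at hG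
        norm_num at hG
      have hGne : (∑ j ∈ Finset.range m, (w ^ (2*k+1)) ^ j * α ^ (m-1-j)) ≠ 0 := by
        intro h
        rw [h, zero_mul] at hG
        norm_num at hG
      field_simp
      linear_combination hG
    have hpow : ∀ k j : ℕ, ((-1:ℂ))^k * (w ^ (2*k+1)) ^ j = w ^ j * (-(w ^ (2*j))) ^ k := by
      intro k j
      have h1 : (w ^ (2*k+1)) ^ j = w ^ j * ((w ^ (2*j)) ^ k) := by
        rw [← pow_mul, ← pow_mul, ← pow_add]
        congr 1
        ring
      rw [h1, neg_pow]
      ring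
    calc ∑ k ∈ Finset.range m, (-1:ℂ)^k * (w ^ (2*k+1) - α)⁻¹
        = ∑ k ∈ Finset.range m, ∑ j ∈ Finset.range m,
            ((-1:ℂ)^k * (w ^ (2*k+1)) ^ j) * α ^ (m-1-j) * (-2)⁻¹ := by
          refine Finset.sum_congr rfl fun k _ => ?_
          rw [hinv k, Finset.sum_mul, Finset.mul_sum]
          refine Finset.sum_congr rfl fun j _ => ?_
          ring
      _ = ∑ j ∈ Finset.range m, ∑ k ∈ Finset.range m,
            ((-1:ℂ)^k * (w ^ (2*k+1)) ^ j) * α ^ (m-1-j) * (-2)⁻¹ := Finset.sum_comm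
      _ = ∑ j ∈ Finset.range m, (-2 : ℂ)⁻¹ * (α ^ (m-1-j) * (w ^ j * gg j)) := by
          refine Finset.sum_congr rfl fun j _ => ?_
          have inner : ∑ k ∈ Finset.range m, ((-1:ℂ)^k * (w ^ (2*k+1)) ^ j)
              = w ^ j * gg j := by
            rw [hgg]
            rw [Finset.mul_sum]
            exact Finset.sum_congr rfl fun k _ => hpow k j
          rw [← Finset.sum_mul, ← Finset.sum_mul, inner]
          ring
      _ = (-2 : ℂ)⁻¹ * ∑ j ∈ Finset.range m, α ^ (m-1-j) * (w ^ j * gg j) := by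
          rw [← Finset.mul_sum]
  -- per-term partial fraction decomposition
  have hterm : ∀ k ∈ Finset.range m,
      (-1 : ℂ) ^ k * (2 + w ^ (2 * k + 1) + (w ^ (2 * k + 1))⁻¹) /
        ((2 + w ^ 2 + (w ^ 2)⁻¹) - (2 + w ^ (2 * k + 1) + (w ^ (2 * k + 1))⁻¹))
      = (-1) * (-1 : ℂ) ^ k
        + (-((w ^ 2 + 1) ^ 2 / (w ^ 2 - (w ^ 2)⁻¹))) *
            ((-1 : ℂ) ^ k * (w ^ (2 * k + 1) - w ^ 2)⁻¹)
        + (((w ^ 2)⁻¹ + 1) ^ 2 / (w ^ 2 - (w ^ 2)⁻¹)) *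
            ((-1 : ℂ) ^ k * (w ^ (2 * k + 1) - (w ^ 2)⁻¹)⁻¹) := by
    intro k _
    have hka : Odd (2 * k + 1) := ⟨k, by ring⟩
    have hz0 : w ^ (2 * k + 1) ≠ 0 := pow_ne_zero _ hw0
    have h1 : w ^ (2 * k + 1) - w ^ 2 ≠ 0 := sub_ne_zero.2 (hza _ hka)
    have h2 : w ^ (2 * k + 1) - (w ^ 2)⁻¹ ≠ 0 := sub_ne_zero.2 (hzb _ hka)
    rw [hden (2 * k + 1)]
    generalize hzz : w ^ (2 * k + 1) = z at h1 h2 hz0 ⊢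
    generalize hvv : (w ^ 2)⁻¹ = v at h2 huu ⊢
    generalize huw : w ^ 2 = u at h1 huu ⊢
    generalize (-1 : ℂ) ^ k = s
    field_simp
    ring
  have hw4 : w ^ 4 - 1 ≠ 0 := sub_ne_zero.2 hw41
  have hw2sub : w ^ 2 - 1 ≠ 0 := sub_ne_zero.2 hw21
  have hc1 : (w ^ 2 + 1) ^ 2 / (w ^ 2 - (w ^ 2)⁻¹)
      = w ^ 2 * (w ^ 2 + 1) ^ 2 * (w ^ 4 - 1)⁻¹ := by
    rw [div_eq_iff huu]
    field_simp
  have hc2 : ((w ^ 2)⁻¹ + 1) ^ 2 / (w ^ 2 - (w ^ 2)⁻¹)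
      = (w ^ 2 + 1) ^ 2 * (w ^ 2)⁻¹ * (w ^ 4 - 1)⁻¹ := by
    rw [div_eq_iff huu]
    field_simp
    ring
  -- per-j combination
  have hj7 : ∀ j, j < m →
      (-((w ^ 2 + 1) ^ 2 / (w ^ 2 - (w ^ 2)⁻¹))) *
          ((-2 : ℂ)⁻¹ * ((w ^ 2) ^ (m - 1 - j) * (w ^ j * gg j)))
        + (((w ^ 2)⁻¹ + 1) ^ 2 / (w ^ 2 - (w ^ 2)⁻¹)) *
          ((-2 : ℂ)⁻¹ * (((w ^ 2)⁻¹) ^ (m - 1 - j) * (w ^ j * gg j)))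
      = ((w ^ 2 + 1) / (w ^ 2 - 1)) * ((w⁻¹) ^ j - w ^ j) := by
    intro j hj
    have e1 : (w ^ 2) ^ (m - 1 - j) = (w ^ 2 * (w ^ j) ^ 2)⁻¹ := by
      refine eq_inv_of_mul_eq_one_left ?_
      have e0 : w ^ 2 * (w ^ j) ^ 2 = (w ^ 2) ^ (j + 1) := by
        rw [← pow_mul, ← pow_mul, ← pow_add]
        congr 1
        ring
      rw [e0, ← pow_add, show m - 1 - j + (j + 1) = m from by omega]
      exact hu2m
    have e2 : ((w ^ 2)⁻¹) ^ (m - 1 - j) = w ^ 2 * (w ^ j) ^ 2 := by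
      rw [inv_pow, e1, inv_inv]
    have e1' : (w ^ 2) ^ (m - 1 - j) = (w ^ 2)⁻¹ * ((w ^ j)⁻¹) ^ 2 := by
      rw [e1, mul_inv, inv_pow]
    have e3 : w ^ (2 * j) = (w ^ j) ^ 2 := by rw [← pow_mul, mul_comm]
    have e4 : (w⁻¹) ^ j = (w ^ j)⁻¹ := inv_pow w j
    have hgkj := hgk j
    rw [e3] at hgkj
    have hWj : w ^ j ≠ 0 := pow_ne_zero _ hw0
    have hW2 : (1 : ℂ) + (w ^ j) ^ 2 ≠ 0 := by rw [← e3]; exact hu1 j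
    rw [hc1, hc2, e1', e2, e4]
    generalize hGm : gg j = G at hgkj ⊢
    generalize hWm : w ^ j = W at hgkj hWj hW2 ⊢
    apply mul_left_cancel₀ hW2
    have expand : (1 + W ^ 2) *
        ((-(w ^ 2 * (w ^ 2 + 1) ^ 2 * (w ^ 4 - 1)⁻¹)) *
          ((-2 : ℂ)⁻¹ * (((w ^ 2)⁻¹ * ((W)⁻¹) ^ 2) * (W * G)))
        + ((w ^ 2 + 1) ^ 2 * (w ^ 2)⁻¹ * (w ^ 4 - 1)⁻¹) *
          ((-2 : ℂ)⁻¹ * ((w ^ 2 * W ^ 2) * (W * G))))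
        = ((-(w ^ 2 * (w ^ 2 + 1) ^ 2 * (w ^ 4 - 1)⁻¹)) *
            ((-2 : ℂ)⁻¹ * ((w ^ 2)⁻¹ * (W⁻¹) ^ 2 * W))
          + ((w ^ 2 + 1) ^ 2 * (w ^ 2)⁻¹ * (w ^ 4 - 1)⁻¹) *
            ((-2 : ℂ)⁻¹ * (w ^ 2 * W ^ 2 * W))) * ((1 + W ^ 2) * G) := by
      ring
    rw [expand, hgkj]
    have hV : (w ^ 2)⁻¹ * w ^ 2 = 1 := inv_mul_cancel₀ hu0
    have hI : W⁻¹ * W = 1 := inv_mul_cancel₀ hWj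
    have hF : (w ^ 4 - 1)⁻¹ * (w ^ 4 - 1) = 1 := inv_mul_cancel₀ hw4
    have hT : (w ^ 2 - 1)⁻¹ * (w ^ 2 - 1) = 1 := inv_mul_cancel₀ hw2sub
    linear_combination
      (-((w ^ 2 + 1) ^ 2 * (w ^ 4 - 1)⁻¹ * (W ^ 3 - W⁻¹ ^ 2 * W))) * hV
      + ((w ^ 2 + 1) ^ 2 * (w ^ 4 - 1)⁻¹ * W⁻¹ + (w ^ 2 + 1) ^ 2 * (w ^ 4 - 1)⁻¹ * W ^ 3
          - (1 + W ^ 2) * (w ^ 2 + 1) * (w ^ 2 - 1)⁻¹ * W) * hI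
      + (W⁻¹ * (1 - W ^ 2) * (1 + W ^ 2) * (w ^ 2 + 1) * (w ^ 2 - 1)⁻¹) * hF
      + (-(W⁻¹ * (1 - W ^ 2) * (1 + W ^ 2) * (w ^ 2 + 1) ^ 2 * (w ^ 4 - 1)⁻¹)) * hT
  -- assemble
  have hvm : (w⁻¹) ^ m = -1 := by rw [inv_pow, hwm, inv_neg, inv_one]
  have hv1 : w⁻¹ ≠ 1 := by
    intro h; exact hw1 (by rw [← inv_inv w, h, inv_one])
  have hv0 : w⁻¹ - 1 ≠ 0 := sub_ne_zero.2 hv1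
  have hw10 : w - 1 ≠ 0 := sub_ne_zero.2 hw1
  calc ∑ k ∈ Finset.range m, (-1 : ℂ) ^ k * (2 + w ^ (2 * k + 1) + (w ^ (2 * k + 1))⁻¹) /
        ((2 + w ^ 2 + (w ^ 2)⁻¹) - (2 + w ^ (2 * k + 1) + (w ^ (2 * k + 1))⁻¹))
      = ∑ k ∈ Finset.range m, ((-1) * (-1 : ℂ) ^ k
        + (-((w ^ 2 + 1) ^ 2 / (w ^ 2 - (w ^ 2)⁻¹))) *
            ((-1 : ℂ) ^ k * (w ^ (2 * k + 1) - w ^ 2)⁻¹)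
        + (((w ^ 2)⁻¹ + 1) ^ 2 / (w ^ 2 - (w ^ 2)⁻¹)) *
            ((-1 : ℂ) ^ k * (w ^ (2 * k + 1) - (w ^ 2)⁻¹)⁻¹)) :=
        Finset.sum_congr rfl hterm
    _ = (-1) * (∑ k ∈ Finset.range m, (-1 : ℂ) ^ k)
        + (-((w ^ 2 + 1) ^ 2 / (w ^ 2 - (w ^ 2)⁻¹))) *
            (∑ k ∈ Finset.range m, (-1 : ℂ) ^ k * (w ^ (2 * k + 1) - w ^ 2)⁻¹)
        + (((w ^ 2)⁻¹ + 1) ^ 2 / (w ^ 2 - (w ^ 2)⁻¹)) *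
            (∑ k ∈ Finset.range m, (-1 : ℂ) ^ k * (w ^ (2 * k + 1) - (w ^ 2)⁻¹)⁻¹) := by
        rw [Finset.sum_add_distrib, Finset.sum_add_distrib, Finset.mul_sum,
          Finset.mul_sum, Finset.mul_sum]
    _ = (-1) * 1
        + (-((w ^ 2 + 1) ^ 2 / (w ^ 2 - (w ^ 2)⁻¹))) *
            ((-2 : ℂ)⁻¹ * ∑ j ∈ Finset.range m, (w ^ 2) ^ (m-1-j) * (w ^ j * gg j))
        + (((w ^ 2)⁻¹ + 1) ^ 2 / (w ^ 2 - (w ^ 2)⁻¹)) *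
            ((-2 : ℂ)⁻¹ * ∑ j ∈ Finset.range m, ((w ^ 2)⁻¹) ^ (m-1-j) * (w ^ j * gg j)) := by
        rw [hBval (w ^ 2) hu2m, hBval ((w ^ 2)⁻¹) hu2m', neg_one_geom_sum,
          if_neg (Nat.not_even_iff_odd.2 hm)]
    _ = -1 + ∑ j ∈ Finset.range m,
          ((-((w ^ 2 + 1) ^ 2 / (w ^ 2 - (w ^ 2)⁻¹))) *
            ((-2 : ℂ)⁻¹ * ((w ^ 2) ^ (m - 1 - j) * (w ^ j * gg j)))
          + (((w ^ 2)⁻¹ + 1) ^ 2 / (w ^ 2 - (w ^ 2)⁻¹)) *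
            ((-2 : ℂ)⁻¹ * (((w ^ 2)⁻¹) ^ (m - 1 - j) * (w ^ j * gg j)))) := by
        rw [Finset.sum_add_distrib, ← Finset.mul_sum, ← Finset.mul_sum,
          ← Finset.mul_sum, ← Finset.mul_sum]
        ring
    _ = -1 + ∑ j ∈ Finset.range m, ((w ^ 2 + 1) / (w ^ 2 - 1)) * ((w⁻¹) ^ j - w ^ j) := by
        congr 1
        exact Finset.sum_congr rfl fun j hj => hj7 j (Finset.mem_range.1 hj)
    _ = -1 + ((w ^ 2 + 1) / (w ^ 2 - 1)) *
          ((∑ j ∈ Finset.range m, (w⁻¹) ^ j) - (∑ j ∈ Finset.range m, w ^ j)) := by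
        rw [← Finset.mul_sum, Finset.sum_sub_distrib]
    _ = -1 + ((w ^ 2 + 1) / (w ^ 2 - 1)) *
          (((-1) - 1) / (w⁻¹ - 1) - ((-1) - 1) / (w - 1)) := by
        rw [geom_sum_eq hv1, geom_sum_eq hw1, hvm, hwm]
    _ = (2 + w + w⁻¹) * ((2 + w + w⁻¹) - 1) /
        ((2 + w ^ 2 + (w ^ 2)⁻¹) - (2 + w + w⁻¹)) := by
        rw [eq_div_iff hQ2Q]
        have hvw : w⁻¹ - 1 = (1 - w) / w := by field_simp
        have h1w : (1 : ℂ) - w ≠ 0 := by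
          intro h; exact hw1 (by linear_combination -h)
        rw [hvw]
        field_simp
        ring

/-- vanishing of the `W_{2,1}` amplitude, section 5.2 of the paper.
Let `p > 2` with `p ≡ 2 (mod 4)`, and `q` odd with `0 < q < p` and `gcd(p, q) = 1`.
Set `ζ := exp(iπ(p-q)/p)` and `Q_a := (ζ^a + ζ^(-a))^2`, with `Q := Q_1`. Then `Q ≠ 0`,
`Q ≠ 1`, `Q_2 ≠ Q`, `Q_2 ≠ Q_a` for every odd `a` with `1 ≤ a ≤ p - 1`, and
`∑_{a=1, a odd}^{p-1} (-1)^((a-1)/2) Q_a/(Q_2 - Q_a) = Q(Q - 1)/(Q_2 - Q)`;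
equivalently
`1 + ((Q_2 - Q)/(Q(1 - Q))) ∑_{a odd} (-1)^((a-1)/2) Q_a/(Q_2 - Q_a) = 0`. -/
theorem typeD_W21_amplitude_cancellation
    (p q : ℕ) (hp2 : 2 < p) (hmod : p % 4 = 2) (hqo : Odd q)
    (hq0 : 0 < q) (hqp : q < p) (hgcd : Nat.gcd p q = 1)
    (ζ : ℂ) (hζ : ζ = Complex.exp (Complex.I * Real.pi * ((p : ℂ) - q) / p))
    (Qa : ℕ → ℂ) (hQa : ∀ a : ℕ, Qa a = (ζ ^ (a : ℤ) + ζ ^ (-(a : ℤ))) ^ 2) :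
    Qa 1 ≠ 0 ∧ Qa 1 ≠ 1 ∧ Qa 2 ≠ Qa 1 ∧
    (∀ a ∈ (Finset.range p).filter (fun a => Odd a), Qa 2 ≠ Qa a) ∧
    (∑ a ∈ (Finset.range p).filter (fun a => Odd a),
        (-1 : ℂ) ^ ((a - 1) / 2) * Qa a / (Qa 2 - Qa a)
      = Qa 1 * (Qa 1 - 1) / (Qa 2 - Qa 1)) ∧
    (1 + (Qa 2 - Qa 1) / (Qa 1 * (1 - Qa 1)) *
        ∑ a ∈ (Finset.range p).filter (fun a => Odd a),
          (-1 : ℂ) ^ ((a - 1) / 2) * Qa a / (Qa 2 - Qa a)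
      = 0) := by
  have hp0 : (p : ℂ) ≠ 0 := Nat.cast_ne_zero.2 (by omega)
  have hπ : (Real.pi : ℂ) ≠ 0 := by exact_mod_cast Real.pi_ne_zero
  set m := p / 2 with hm_def
  have hpm : p = 2 * m := by omega
  have hm : Odd m := by
    have hmo : m % 2 = 1 := by omega
    exact ⟨m / 2, by omega⟩
  have hm1 : 1 < m := by omega
  set w := ζ ^ 2 with hw_def
  have hζ0 : ζ ≠ 0 := by rw [hζ]; exact Complex.exp_ne_zero _
  have hco : Nat.gcd p (p - q) = 1 := by
    have d1 := Nat.gcd_dvd_left p (p - q)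
    have d2 := Nat.gcd_dvd_right p (p - q)
    have d3 : Nat.gcd p (p - q) ∣ q := by
      have h := Nat.dvd_sub d1 d2
      rwa [show p - (p - q) = q by omega] at h
    have h := Nat.dvd_gcd d1 d3
    rw [hgcd] at h
    exact Nat.dvd_one.1 h
  have h2πI : (2 : ℂ) * Real.pi * Complex.I ≠ 0 :=
    mul_ne_zero (mul_ne_zero two_ne_zero hπ) Complex.I_ne_zero
  have hord : ∀ t : ℕ, w ^ t = 1 ↔ 2 * m ∣ t := by
    intro t
    have hwt : w ^ t
        = Complex.exp (((2 * t : ℕ) : ℂ) * (Complex.I * Real.pi * ((p : ℂ) - q) / p)) := by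
      rw [hw_def, ← pow_mul, hζ, ← Complex.exp_nat_mul]
    rw [hwt, Complex.exp_eq_one_iff, ← hpm]
    have hr : (Complex.I * Real.pi * ((p : ℂ) - q) / p) * p
        = Complex.I * Real.pi * ((p : ℂ) - q) := div_mul_cancel₀ _ hp0
    constructor
    · rintro ⟨n, hn⟩
      push_cast at hn
      have key : (t : ℂ) * ((p : ℂ) - q) = n * p := by
        apply mul_left_cancel₀ h2πI
        linear_combination (p : ℂ) * hn - 2 * (t : ℂ) * hr
      have key2 : ((t * (p - q) : ℕ) : ℂ) = ((n * p : ℤ) : ℂ) := by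
        push_cast [Nat.cast_sub hqp.le]
        linear_combination key
      have key3 : ((t * (p - q) : ℕ) : ℤ) = n * p := by exact_mod_cast key2
      have key4 : (p : ℤ) ∣ ((t * (p - q) : ℕ) : ℤ) := ⟨n, by linarith⟩
      have key5 : p ∣ t * (p - q) := by exact_mod_cast key4
      exact (Nat.Coprime.dvd_of_dvd_mul_right hco key5)
    · rintro ⟨s, rfl⟩
      refine ⟨((s * (p - q) : ℕ) : ℤ), ?_⟩
      push_cast [Nat.cast_sub hqp.le]
      field_simp
  have hQw : ∀ a : ℕ, Qa a = 2 + w ^ a + (w ^ a)⁻¹ := by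
    intro a
    rw [hQa a]
    have h1 : ζ ^ (a : ℤ) = ζ ^ a := zpow_natCast ζ a
    have h2 : ζ ^ (-(a : ℤ)) = (ζ ^ a)⁻¹ := by rw [zpow_neg, zpow_natCast]
    have h3 : w ^ a = (ζ ^ a) ^ 2 := by
      rw [hw_def, ← pow_mul, ← pow_mul, mul_comm]
    rw [h1, h2, h3]
    have hz : ζ ^ a ≠ 0 := pow_ne_zero _ hζ0
    field_simp
    ring
  obtain ⟨hQ0, hQ1, hQ2Q, hdenne, hsum⟩ := core_lemma m hm hm1 w hord
  have c1 : Qa 1 ≠ 0 := by rw [hQw 1, pow_one]; exact hQ0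
  have c2 : Qa 1 ≠ 1 := by rw [hQw 1, pow_one]; exact hQ1
  have c3 : Qa 2 ≠ Qa 1 := by
    rw [hQw 2, hQw 1, pow_one]
    intro h
    exact hQ2Q (by rw [h]; ring)
  have c4 : ∀ a ∈ (Finset.range p).filter (fun a => Odd a), Qa 2 ≠ Qa a := by
    intro a ha
    have hodd : Odd a := (Finset.mem_filter.1 ha).2
    rw [hQw 2, hQw a]
    intro h
    exact hdenne a hodd (by rw [h]; ring)
  have hset : (Finset.range p).filter (fun a => Odd a)
      = (Finset.range m).image (fun k => 2 * k + 1) := by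
    ext x
    simp only [Finset.mem_filter, Finset.mem_range, Finset.mem_image]
    constructor
    · rintro ⟨hx, k, hk⟩
      exact ⟨k, by omega, by omega⟩
    · rintro ⟨k, hk, rfl⟩
      exact ⟨by omega, k, by omega⟩
  have c5 : (∑ a ∈ (Finset.range p).filter (fun a => Odd a),
      (-1 : ℂ) ^ ((a - 1) / 2) * Qa a / (Qa 2 - Qa a)
      = Qa 1 * (Qa 1 - 1) / (Qa 2 - Qa 1)) := by
    rw [hset, Finset.sum_image (fun a _ b _ h => by omega)]
    calc ∑ k ∈ Finset.range m,
          (-1 : ℂ) ^ ((2 * k + 1 - 1) / 2) * Qa (2 * k + 1) / (Qa 2 - Qa (2 * k + 1))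
        = ∑ k ∈ Finset.range m,
            (-1 : ℂ) ^ k * (2 + w ^ (2 * k + 1) + (w ^ (2 * k + 1))⁻¹) /
              ((2 + w ^ 2 + (w ^ 2)⁻¹) - (2 + w ^ (2 * k + 1) + (w ^ (2 * k + 1))⁻¹)) := by
          refine Finset.sum_congr rfl fun k _ => ?_
          have e : (2 * k + 1 - 1) / 2 = k := by omega
          rw [e, hQw (2 * k + 1), hQw 2]
      _ = (2 + w + w⁻¹) * ((2 + w + w⁻¹) - 1) /
            ((2 + w ^ 2 + (w ^ 2)⁻¹) - (2 + w + w⁻¹)) := hsum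
      _ = Qa 1 * (Qa 1 - 1) / (Qa 2 - Qa 1) := by rw [hQw 1, hQw 2, pow_one]
  refine ⟨c1, c2, c3, c4, c5, ?_⟩
  rw [c5]
  have hA1 : (1 : ℂ) - Qa 1 ≠ 0 := sub_ne_zero.2 fun h => c2 h.symm
  have hBA : Qa 2 - Qa 1 ≠ 0 := sub_ne_zero.2 c3
  have hkey : (Qa 2 - Qa 1) / (Qa 1 * (1 - Qa 1)) * (Qa 1 * (Qa 1 - 1) / (Qa 2 - Qa 1))
      = -1 := by
    rw [div_mul_div_comm, div_eq_iff (mul_ne_zero (mul_ne_zero c1 hA1) hBA)]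
    ring
  rw [hkey]
  ring
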